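/- Focused product distributions have small parity bias: There exists N such that for every n ≥ N the following holds with m = n^256 (so √m = n^128 is an integer). Let I ⊆ [n] be nonempty and let x (over [m]^I) and y (over ({0,1}^m)^I) be independent random variables such that the product distribution x × y is focused. Then |E[(−1)^(Σ_{i∈I} Ind_m(x_i, y_i))]| ≤ (1/2) · n^(−5|I|). -/

import Mathlib

open Finset

/-- The bucket index of `j ∈ [m]` where `m = n^256` is partitioned into `√m = n^128`
consecutive buckets of size `√m = n^128` each. -/
def bucket (n : ℕ) (j : Fin (n ^ 256)) : Fin (n ^ 128) :=
  ⟨j.val / n ^ 128, by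
    have hj := j.isLt
    have hn : 0 < n := by
      rcases Nat.eq_zero_or_pos n with rfl | h
      · exact absurd hj (by norm_num)
      · exact h
    have h256 : n ^ 256 = n ^ 128 * n ^ 128 := by ring
    exact Nat.div_lt_of_lt_mul (h256 ▸ hj)⟩

/-- The product distribution `x × y` (given by pmfs `px`, `py` over `[m]^I` resp.
`({0,1}^m)^I`, with `m = n^256`) is *focused*: there is a partial assignment
`σ ∈ {0,1,*}^I` (encoded by `Option Bool`, `none` = `*`) with free set `I' = σ⁻¹(*)` and
bucket indices `ℓᵢ` such that `|I'| ≥ |I|/2`; the gadget outputs agree with `σ` on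
`I ∖ I'` with probability 1; for `i ∈ I'` the pointer `xᵢ` lies in bucket `T_{ℓᵢ}` with
probability 1; `Pr[x_{I'} = a] ≤ (√m)^(−0.4|I'|)` for every `a`; and
`Pr[y_T = γ] ≤ 2·2^(−|I'|·√m)` for every `γ`, where `T = ⋃_{i∈I'} {i} × T_{ℓᵢ}`. -/
def Focused (n : ℕ) (I : Finset (Fin n))
    (px : ({i // i ∈ I} → Fin (n ^ 256)) → ℝ)
    (py : ({i // i ∈ I} → Fin (n ^ 256) → Bool) → ℝ) : Prop :=
  ∃ (σ : {i // i ∈ I} → Option Bool) (ℓ : {i // i ∈ I} → Fin (n ^ 128)),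
    -- |I'| ≥ |I|/2
    I.card ≤ 2 * (Finset.univ.filter fun i => σ i = none).card ∧
    -- the gadget outputs agree with σ on I ∖ I' with probability 1
    (∀ x, px x ≠ 0 → ∀ y, py y ≠ 0 → ∀ i, ∀ b : Bool, σ i = some b → y i (x i) = b) ∧
    -- for each i ∈ I', the pointer x_i lies in the bucket T_{ℓ_i} with probability 1
    (∀ x, px x ≠ 0 → ∀ i, σ i = none → bucket n (x i) = ℓ i) ∧
    -- Pr[x_{I'} = a] ≤ (√m)^(−0.4|I'|) for every a
    (∀ a : {i // i ∈ I} → Fin (n ^ 256),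
      ∑ x ∈ Finset.univ.filter
          (fun x : {i // i ∈ I} → Fin (n ^ 256) => ∀ i, σ i = none → x i = a i), px x ≤
        ((n ^ 128 : ℕ) : ℝ) ^
          (-(0.4 * (((Finset.univ.filter fun i => σ i = none).card : ℝ))))) ∧
    -- Pr[y_T = γ] ≤ 2·2^(−|I'|·√m) for every γ
    (∀ γ : {i // i ∈ I} → Fin (n ^ 256) → Bool,
      ∑ y ∈ Finset.univ.filter
          (fun y : {i // i ∈ I} → Fin (n ^ 256) → Bool =>
            ∀ i, σ i = none → ∀ j, bucket n j = ℓ i → y i j = γ i j), py y ≤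
        2 * (2 : ℝ) ^
          (-((((Finset.univ.filter fun i => σ i = none).card : ℝ)) * ((n ^ 128 : ℕ) : ℝ))))

/-- Sum over a function type of a product factorizes. -/
lemma sum_fun_prod {X Y : Type*} [Fintype X] [DecidableEq X] [Fintype Y]
    (h : X → Y → ℝ) :
    ∑ g : X → Y, ∏ x, h x (g x) = ∏ x, ∑ y, h x y := by
  rw [Finset.prod_univ_sum (fun _ => (univ : Finset Y)) h, Fintype.piFinset_univ]

/-- single-coordinate character orthogonality -/
lemma char_orth_single {Y : Type*} [Fintype Y] [DecidableEq Y] (p q : Y) :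
    ∑ g : Y → Bool, ((if g p then (-1:ℝ) else 1) * (if g q then (-1:ℝ) else 1))
      = if p = q then (2:ℝ) ^ Fintype.card Y else 0 := by
  have key : ∀ g : Y → Bool,
      ((if g p then (-1:ℝ) else 1) * (if g q then (-1:ℝ) else 1))
        = ∏ y, ((fun y (b : Bool) => (if y = p then (if b then (-1:ℝ) else 1) else 1) *
                 (if y = q then (if b then (-1:ℝ) else 1) else 1)) y (g y)) := by
    intro g
    simp only
    rw [Finset.prod_mul_distrib, Finset.prod_ite_eq' univ p (fun y => if g y then (-1:ℝ) else 1),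
      Finset.prod_ite_eq' univ q (fun y => if g y then (-1:ℝ) else 1)]
    simp
  refine (Finset.sum_congr rfl (fun g _ => key g)).trans ((sum_fun_prod (fun y (b : Bool) =>
    (if y = p then (if b then (-1:ℝ) else 1) else 1) *
    (if y = q then (if b then (-1:ℝ) else 1) else 1))).trans ?_)
  by_cases hpq : p = q
  · subst hpq
    simp only [if_pos rfl]
    have : ∀ y : Y, (∑ b : Bool, ((if y = p then (if b then (-1:ℝ) else 1) else 1) *
        (if y = p then (if b then (-1:ℝ) else 1) else 1))) = 2 := by
      intro y
      by_cases hy : y = p <;> simp [hy, Fintype.sum_bool] <;> norm_num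
    rw [Finset.prod_congr rfl (fun y _ => this y), Finset.prod_const]
    rfl
  · rw [if_neg hpq]
    apply Finset.prod_eq_zero (Finset.mem_univ p)
    simp [hpq, Fintype.sum_bool]

/-- character orthogonality over the whole bucket-bit space -/
lemma char_orth {X Y : Type*} [Fintype X] [DecidableEq X] [Fintype Y] [DecidableEq Y]
    (α α' : X → Y) :
    ∑ γ : X → Y → Bool,
      (∏ x, (if γ x (α x) then (-1:ℝ) else 1)) * (∏ x, (if γ x (α' x) then (-1:ℝ) else 1))
      = if α = α' then (2:ℝ) ^ (Fintype.card X * Fintype.card Y) else 0 := by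
  have key : ∀ γ : X → Y → Bool,
      (∏ x, (if γ x (α x) then (-1:ℝ) else 1)) * (∏ x, (if γ x (α' x) then (-1:ℝ) else 1))
        = ∏ x, ((fun x (g : Y → Bool) =>
            (if g (α x) then (-1:ℝ) else 1) * (if g (α' x) then (-1:ℝ) else 1)) x (γ x)) := by
    intro γ; rw [← Finset.prod_mul_distrib]
  refine (Finset.sum_congr rfl fun γ _ => key γ).trans
    ((sum_fun_prod (fun x (g : Y → Bool) =>
      (if g (α x) then (-1:ℝ) else 1) * (if g (α' x) then (-1:ℝ) else 1))).trans ?_)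
  rw [Finset.prod_congr rfl fun x _ => char_orth_single (α x) (α' x)]
  by_cases h : α = α'
  · subst h
    simp only [eq_self_iff_true, if_true, Finset.prod_const, Finset.card_univ]
    rw [← pow_mul, Nat.mul_comm]
  · rw [if_neg h]
    obtain ⟨x, hx⟩ : ∃ x, α x ≠ α' x := by
      by_contra hh; push_neg at hh; exact h (funext hh)
    exact Finset.prod_eq_zero (mem_univ x) (by rw [if_neg hx])

/-- Bessel's inequality for an orthogonal family, hand-rolled. -/
lemma bessel {A X : Type*} [Fintype A] [Fintype X] [DecidableEq A]
    (u : A → X → ℝ) (Q : X → ℝ) (c : ℝ) (hc : 0 < c)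
    (ho : ∀ a a', ∑ x, u a x * u a' x = if a = a' then c else 0) :
    ∑ a, (∑ x, Q x * u a x) ^ 2 ≤ c * ∑ x, Q x ^ 2 := by
  set G : A → ℝ := fun a => ∑ x, Q x * u a x with hG
  have h1 : ∑ x, Q x * (∑ a, G a * u a x) = ∑ a, G a ^ 2 := by
    have e : ∀ x, Q x * (∑ a, G a * u a x) = ∑ a, G a * (Q x * u a x) := by
      intro x; rw [Finset.mul_sum]; exact Finset.sum_congr rfl fun a _ => by ring
    rw [Finset.sum_congr rfl fun x _ => e x, Finset.sum_comm]
    refine Finset.sum_congr rfl fun a _ => ?_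
    rw [← Finset.mul_sum, sq]
  have h2 : ∑ x, (∑ a, G a * u a x) ^ 2 = c * ∑ a, G a ^ 2 := by
    have e1 : ∀ x, (∑ a, G a * u a x) ^ 2
        = ∑ a, ∑ b, (G a * G b) * (u a x * u b x) := by
      intro x; rw [sq, Finset.sum_mul_sum]
      exact Finset.sum_congr rfl fun a _ => Finset.sum_congr rfl fun b _ => by ring
    calc ∑ x, (∑ a, G a * u a x) ^ 2
        = ∑ x, ∑ a, ∑ b, (G a * G b) * (u a x * u b x) :=
          Finset.sum_congr rfl fun x _ => e1 x
      _ = ∑ a, ∑ x, ∑ b, (G a * G b) * (u a x * u b x) := Finset.sum_comm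
      _ = ∑ a, ∑ b, ∑ x, (G a * G b) * (u a x * u b x) :=
          Finset.sum_congr rfl fun a _ => Finset.sum_comm
      _ = ∑ a, ∑ b, (G a * G b) * ∑ x, u a x * u b x :=
          Finset.sum_congr rfl fun a _ => Finset.sum_congr rfl fun b _ =>
            (Finset.mul_sum _ _ _).symm
      _ = ∑ a, ∑ b, (G a * G b) * (if a = b then c else 0) := by
          exact Finset.sum_congr rfl fun a _ => Finset.sum_congr rfl fun b _ => by rw [ho]
      _ = ∑ a, (G a * G a) * c := by
          refine Finset.sum_congr rfl fun a _ => ?_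
          rw [Finset.sum_eq_single a (fun b _ hb => by simp [Ne.symm hb]) (by simp)]
          simp
      _ = c * ∑ a, G a ^ 2 := by
          rw [Finset.mul_sum]; exact Finset.sum_congr rfl fun a _ => by ring
  have key : (0:ℝ) ≤ ∑ x, (Q x - c⁻¹ * ∑ a, G a * u a x) ^ 2 :=
    Finset.sum_nonneg fun _ _ => sq_nonneg _
  have expand : ∑ x, (Q x - c⁻¹ * ∑ a, G a * u a x) ^ 2
      = ∑ x, Q x ^ 2 - 2 * c⁻¹ * (∑ x, Q x * ∑ a, G a * u a x)
        + c⁻¹ ^ 2 * ∑ x, (∑ a, G a * u a x) ^ 2 := by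
    have e : ∀ x, (Q x - c⁻¹ * ∑ a, G a * u a x) ^ 2
        = (Q x ^ 2 - 2 * c⁻¹ * (Q x * ∑ a, G a * u a x))
          + c⁻¹ ^ 2 * (∑ a, G a * u a x) ^ 2 := fun x => by ring
    rw [Finset.sum_congr rfl fun x _ => e x, Finset.sum_add_distrib,
      Finset.sum_sub_distrib, ← Finset.mul_sum, ← Finset.mul_sum]
  rw [expand, h1, h2] at key
  have hc' : c ≠ 0 := ne_of_gt hc
  have e2 : c⁻¹ ^ 2 * (c * ∑ a, G a ^ 2) = c⁻¹ * ∑ a, G a ^ 2 := by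
    field_simp
  rw [e2] at key
  have h3 : c⁻¹ * ∑ a, G a ^ 2 ≤ ∑ x, Q x ^ 2 := by linarith
  calc ∑ a, G a ^ 2 = c * (c⁻¹ * ∑ a, G a ^ 2) := by field_simp
    _ ≤ c * ∑ x, Q x ^ 2 := mul_le_mul_of_nonneg_left h3 hc.le

/-- **Focused product distributions have small parity bias.** There is `N` such that for
all `n ≥ N` (with `m = n^256`): if `I ⊆ [n]` is nonempty and `x`, `y` are independent
with `x × y` focused, then `|E[(−1)^(Σ_{i∈I} Ind_m(x_i,y_i))]| ≤ (1/2)·n^(−5|I|)`. -/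
theorem focused_small_bias :
    ∃ N : ℕ, ∀ n : ℕ, N ≤ n →
    ∀ I : Finset (Fin n), I.Nonempty →
    ∀ (px : ({i // i ∈ I} → Fin (n ^ 256)) → ℝ)
      (py : ({i // i ∈ I} → Fin (n ^ 256) → Bool) → ℝ),
      (∀ a, 0 ≤ px a) → (∑ a, px a = 1) →
      (∀ b, 0 ≤ py b) → (∑ b, py b = 1) →
      Focused n I px py →
      |∑ a, ∑ b, px a * py b * (-1 : ℝ) ^ (∑ i, if b i (a i) then 1 else 0)| ≤
        (1 / 2) * (n : ℝ) ^ (-(5 * (I.card : ℝ))) := by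
  refine ⟨8, fun n hn I hI px py hpx0 hpx1 hpy0 hpy1 hfoc => ?_⟩
  obtain ⟨σ, ℓ, hcard, hfix, hbuck, hx, hy⟩ := hfoc
  have hn0 : 0 < n := by omega
  have hs : 0 < n ^ 128 := Nat.pow_pos hn0
  have hm : 0 < n ^ 256 := Nat.pow_pos hn0
  set k := (Finset.univ.filter fun i : {i // i ∈ I} => σ i = none).card with hkdef
  have hk1 : 1 ≤ k := by
    have : 0 < I.card := Finset.card_pos.mpr hI
    omega
  have hkJf : Fintype.card {i : {i // i ∈ I} // σ i = none} = k :=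
    Fintype.card_subtype _
  -- bucket embedding
  have embP : ∀ (i : {i : {i // i ∈ I} // σ i = none}) (j : Fin (n ^ 128)),
      n ^ 128 * (ℓ i.1).val + j.val < n ^ 256 := by
    intro i j
    have h1 : (ℓ i.1).val + 1 ≤ n ^ 128 := (ℓ i.1).isLt
    have h2 : j.val < n ^ 128 := j.isLt
    have h3 : n ^ 128 * (ℓ i.1).val + n ^ 128 ≤ n ^ 128 * n ^ 128 := by
      have := Nat.mul_le_mul_left (n ^ 128) h1
      rwa [Nat.mul_add, Nat.mul_one] at this
    have h256 : n ^ 256 = n ^ 128 * n ^ 128 := by ring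
    omega
  set emb : {i : {i // i ∈ I} // σ i = none} → Fin (n ^ 128) → Fin (n ^ 256) :=
    fun i j => ⟨n ^ 128 * (ℓ i.1).val + j.val, embP i j⟩ with hembdef
  have hembbuck : ∀ i j, bucket n (emb i j) = ℓ i.1 := by
    intro i j
    apply Fin.ext
    show (n ^ 128 * (ℓ i.1).val + j.val) / n ^ 128 = (ℓ i.1).val
    rw [Nat.mul_add_div hs, Nat.div_eq_of_lt j.isLt, Nat.add_zero]
  set rel : ({i // i ∈ I} → Fin (n ^ 256)) →
      ({i : {i // i ∈ I} // σ i = none} → Fin (n ^ 128)) :=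
    fun a i => ⟨(a i.1).val % n ^ 128, Nat.mod_lt _ hs⟩ with hreldef
  have hembrel : ∀ (a : {i // i ∈ I} → Fin (n ^ 256)) (i : {i : {i // i ∈ I} // σ i = none}),
      bucket n (a i.1) = ℓ i.1 → emb i (rel a i) = a i.1 := by
    intro a i hb
    apply Fin.ext
    have hb' : (a i.1).val / n ^ 128 = (ℓ i.1).val := congrArg Fin.val hb
    show n ^ 128 * (ℓ i.1).val + (a i.1).val % n ^ 128 = (a i.1).val
    rw [← hb', Nat.div_add_mod]
  have hembrel' : ∀ (i : {i : {i // i ∈ I} // σ i = none}) (j : Fin (n ^ 256)),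
      bucket n j = ℓ i.1 → emb i ⟨j.val % n ^ 128, Nat.mod_lt _ hs⟩ = j := by
    intro i j hb
    apply Fin.ext
    have hb' : j.val / n ^ 128 = (ℓ i.1).val := congrArg Fin.val hb
    show n ^ 128 * (ℓ i.1).val + j.val % n ^ 128 = j.val
    rw [← hb', Nat.div_add_mod]
  set τ : ({i // i ∈ I} → Fin (n ^ 256) → Bool) →
      ({i : {i // i ∈ I} // σ i = none} → Fin (n ^ 128) → Bool) :=
    fun b i j => b i.1 (emb i j) with hτdef
  set χ : ({i : {i // i ∈ I} // σ i = none} → Fin (n ^ 128)) →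
      ({i : {i // i ∈ I} // σ i = none} → Fin (n ^ 128) → Bool) → ℝ :=
    fun α γ => ∏ i, if γ i (α i) then (-1:ℝ) else 1 with hχdef
  -- Step 1: sign extraction
  set ε : ℝ := ∏ i ∈ Finset.univ.filter (fun i : {i // i ∈ I} => ¬ σ i = none),
      (if (σ i).getD false then (-1:ℝ) else 1) with hεdef
  have hεabs : |ε| = 1 := by
    rw [hεdef, Finset.abs_prod]
    refine Finset.prod_eq_one fun i _ => ?_
    by_cases h : (σ i).getD false <;> simp [h]
  have step1 : ∀ (a : {i // i ∈ I} → Fin (n ^ 256)) (b : {i // i ∈ I} → Fin (n ^ 256) → Bool),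
      px a * py b * (-1 : ℝ) ^ (∑ i, if b i (a i) then 1 else 0)
        = ε * (px a * py b *
            ∏ i ∈ Finset.univ.filter (fun i : {i // i ∈ I} => σ i = none),
              (if b i (a i) then (-1:ℝ) else 1)) := by
    intro a b
    by_cases ha : px a = 0
    · simp [ha]
    by_cases hb : py b = 0
    · simp [hb]
    have e1 : (-1 : ℝ) ^ (∑ i, if b i (a i) then 1 else 0)
        = ∏ i : {i // i ∈ I}, (if b i (a i) then (-1:ℝ) else 1) := by
      rw [← Finset.prod_pow_eq_pow_sum]
      exact Finset.prod_congr rfl fun i _ => by by_cases h : b i (a i) <;> simp [h]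
    rw [e1, ← Finset.prod_filter_mul_prod_filter_not Finset.univ
      (fun i : {i // i ∈ I} => σ i = none)]
    have e2 : ∏ i ∈ Finset.univ.filter (fun i : {i // i ∈ I} => ¬ σ i = none),
        (if b i (a i) then (-1:ℝ) else 1) = ε := by
      rw [hεdef]
      refine Finset.prod_congr rfl fun i hi => ?_
      rw [Finset.mem_filter] at hi
      obtain ⟨c, hc⟩ := Option.ne_none_iff_exists'.mp hi.2
      rw [hfix a ha b hb i c hc, hc]
      rfl
    rw [e2]
    ring
  rw [Finset.sum_congr rfl fun a _ => Finset.sum_congr rfl fun b _ => step1 a b]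
  simp_rw [← Finset.mul_sum]
  rw [abs_mul, hεabs, one_mul]
  -- Step 2: restrict to the bucket support, rewrite via χ
  set A : Finset ({i // i ∈ I} → Fin (n ^ 256)) :=
    Finset.univ.filter (fun a => ∀ i, σ i = none → bucket n (a i) = ℓ i) with hAdef
  have hres : ∑ a, ∑ b, px a * py b *
        ∏ i ∈ Finset.univ.filter (fun i : {i // i ∈ I} => σ i = none),
          (if b i (a i) then (-1:ℝ) else 1)
      = ∑ a ∈ A, px a * ∑ b, py b * χ (rel a) (τ b) := by
    rw [← Finset.sum_subset (Finset.subset_univ A)]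
    · refine Finset.sum_congr rfl fun a ha => ?_
      rw [hAdef, Finset.mem_filter] at ha
      rw [Finset.mul_sum]
      refine Finset.sum_congr rfl fun b _ => ?_
      have e3 : ∏ i ∈ Finset.univ.filter (fun i : {i // i ∈ I} => σ i = none),
          (if b i (a i) then (-1:ℝ) else 1) = χ (rel a) (τ b) := by
        rw [hχdef]
        calc ∏ i ∈ Finset.univ.filter (fun i : {i // i ∈ I} => σ i = none),
              (if b i (a i) then (-1:ℝ) else 1)
            = ∏ i : {i : {i // i ∈ I} // σ i = none},
                (if b i.1 (a i.1) then (-1:ℝ) else 1) :=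
              (Finset.prod_subtype _ (fun i => by simp) _)
          _ = ∏ i : {i : {i // i ∈ I} // σ i = none},
                (if τ b i (rel a i) then (-1:ℝ) else 1) := by
              refine Finset.prod_congr rfl fun i _ => ?_
              have he : emb i (rel a i) = a i.1 := hembrel a i (ha.2 i.1 i.2)
              simp only [hτdef, he]
      rw [e3]; ring
    · intro a _ ha
      have h0 : px a = 0 := by
        by_contra hpa
        exact ha (Finset.mem_filter.mpr ⟨Finset.mem_univ _, hbuck a hpa⟩)
      simp [h0]
  rw [hres]
  -- Step 3: marginalize over rel (for x) and τ (for y)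
  set P : ({i : {i // i ∈ I} // σ i = none} → Fin (n ^ 128)) → ℝ :=
    fun α => ∑ a ∈ A.filter (fun a => rel a = α), px a with hPdef
  set Qm : ({i : {i // i ∈ I} // σ i = none} → Fin (n ^ 128) → Bool) → ℝ :=
    fun γ => ∑ b ∈ Finset.univ.filter (fun b => τ b = γ), py b with hQdef
  set G : ({i : {i // i ∈ I} // σ i = none} → Fin (n ^ 128)) → ℝ :=
    fun α => ∑ γ, Qm γ * χ α γ with hGdef
  have hF : ∀ α, (∑ b, py b * χ α (τ b)) = G α := by
    intro α
    rw [hGdef]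
    simp only
    rw [← Finset.sum_fiberwise_of_maps_to (fun b _ => Finset.mem_univ (τ b))
      (fun b => py b * χ α (τ b))]
    refine Finset.sum_congr rfl fun γ _ => ?_
    rw [hQdef]
    simp only
    rw [Finset.sum_mul]
    refine Finset.sum_congr rfl fun b hb => ?_
    rw [(Finset.mem_filter.mp hb).2]
  have hmarg : ∑ a ∈ A, px a * ∑ b, py b * χ (rel a) (τ b) = ∑ α, P α * G α := by
    rw [← Finset.sum_fiberwise_of_maps_to (fun a _ => Finset.mem_univ (rel a))
      (fun a => px a * ∑ b, py b * χ (rel a) (τ b))]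
    refine Finset.sum_congr rfl fun α _ => ?_
    rw [hPdef]
    simp only
    rw [Finset.sum_mul]
    refine Finset.sum_congr rfl fun a ha => ?_
    rw [(Finset.mem_filter.mp ha).2, hF α]
  rw [hmarg]
  -- Step 4: bounds on P
  have hP0 : ∀ α, 0 ≤ P α := fun α => Finset.sum_nonneg fun a _ => hpx0 a
  have hPsum : ∑ α, P α ≤ 1 := by
    rw [hPdef]
    simp only
    rw [Finset.sum_fiberwise_of_maps_to (fun a _ => Finset.mem_univ (rel a)) px]
    rw [← hpx1]
    exact Finset.sum_le_sum_of_subset_of_nonneg (Finset.subset_univ A)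
      (fun a _ _ => hpx0 a)
  have hPle : ∀ α, P α ≤ ((n ^ 128 : ℕ) : ℝ) ^ (-(0.4 * (k : ℝ))) := by
    intro α
    set a₀ : {i // i ∈ I} → Fin (n ^ 256) :=
      fun i => if h : σ i = none then emb ⟨i, h⟩ (α ⟨i, h⟩) else ⟨0, hm⟩ with ha₀
    refine le_trans ?_ (hx a₀)
    rw [hPdef]
    refine Finset.sum_le_sum_of_subset_of_nonneg ?_ (fun a _ _ => hpx0 a)
    intro a ha
    rw [Finset.mem_filter] at ha
    obtain ⟨hA', hrel⟩ := ha
    rw [hAdef, Finset.mem_filter] at hA'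
    refine Finset.mem_filter.mpr ⟨Finset.mem_univ _, fun i hi => ?_⟩
    have e5 : emb ⟨i, hi⟩ (rel a ⟨i, hi⟩) = a i := hembrel a ⟨i, hi⟩ (hA'.2 i hi)
    rw [ha₀]
    simp only [dif_pos hi]
    rw [← hrel, e5]
  -- Step 5: bounds on Qm
  have hQ0 : ∀ γ, 0 ≤ Qm γ := fun γ => Finset.sum_nonneg fun b _ => hpy0 b
  have hQsum : ∑ γ, Qm γ = 1 := by
    rw [hQdef]
    simp only
    rw [Finset.sum_fiberwise_of_maps_to (fun b _ => Finset.mem_univ (τ b)) py]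
    exact hpy1
  have hQle : ∀ γ, Qm γ ≤ 2 * (2:ℝ) ^ (-((k : ℝ) * ((n ^ 128 : ℕ) : ℝ))) := by
    intro γ
    set γf : {i // i ∈ I} → Fin (n ^ 256) → Bool :=
      fun i j => if h : σ i = none then γ ⟨i, h⟩ ⟨j.val % n ^ 128, Nat.mod_lt _ hs⟩
        else false with hγf
    refine le_trans ?_ (hy γf)
    rw [hQdef]
    refine Finset.sum_le_sum_of_subset_of_nonneg ?_ (fun b _ _ => hpy0 b)
    intro b hb
    rw [Finset.mem_filter] at hb
    refine Finset.mem_filter.mpr ⟨Finset.mem_univ _, fun i hi j hj => ?_⟩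
    have he : emb ⟨i, hi⟩ ⟨j.val % n ^ 128, Nat.mod_lt _ hs⟩ = j := hembrel' ⟨i, hi⟩ j hj
    rw [hγf]
    simp only [dif_pos hi]
    rw [← hb.2]
    simp only [hτdef, he]
  -- Step 6: Cauchy-Schwarz and Bessel
  have hCS : (∑ α, P α * G α) ^ 2 ≤ (∑ α, P α ^ 2) * ∑ α, G α ^ 2 :=
    Finset.sum_mul_sq_le_sq_mul_sq _ _ _
  have hPP : ∑ α, P α ^ 2 ≤ ((n ^ 128 : ℕ) : ℝ) ^ (-(0.4 * (k : ℝ))) := by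
    calc ∑ α, P α ^ 2
        ≤ ∑ α, ((n ^ 128 : ℕ) : ℝ) ^ (-(0.4 * (k : ℝ))) * P α := by
          refine Finset.sum_le_sum fun α _ => ?_
          rw [sq]
          exact mul_le_mul_of_nonneg_right (hPle α) (hP0 α)
      _ = ((n ^ 128 : ℕ) : ℝ) ^ (-(0.4 * (k : ℝ))) * ∑ α, P α := by
          rw [Finset.mul_sum]
      _ ≤ ((n ^ 128 : ℕ) : ℝ) ^ (-(0.4 * (k : ℝ))) * 1 := by
          exact mul_le_mul_of_nonneg_left hPsum (Real.rpow_nonneg (by positivity) _)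
      _ = ((n ^ 128 : ℕ) : ℝ) ^ (-(0.4 * (k : ℝ))) := mul_one _
  have horth : ∀ α α' : {i : {i // i ∈ I} // σ i = none} → Fin (n ^ 128),
      ∑ γ, χ α γ * χ α' γ = if α = α' then ((2:ℝ) ^ (k * n ^ 128)) else 0 := by
    intro α α'
    have := char_orth α α'
    rw [hkJf, Fintype.card_fin] at this
    rw [hχdef]
    exact this
  have hGG : ∑ α, G α ^ 2 ≤ 2 := by
    have hbes := bessel χ Qm ((2:ℝ) ^ (k * n ^ 128)) (by positivity) horth
    have hQQ : ∑ γ, Qm γ ^ 2 ≤ 2 * (2:ℝ) ^ (-((k : ℝ) * ((n ^ 128 : ℕ) : ℝ))) := by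
      calc ∑ γ, Qm γ ^ 2
          ≤ ∑ γ, 2 * (2:ℝ) ^ (-((k : ℝ) * ((n ^ 128 : ℕ) : ℝ))) * Qm γ := by
            refine Finset.sum_le_sum fun γ _ => ?_
            rw [sq]
            exact mul_le_mul_of_nonneg_right (hQle γ) (hQ0 γ)
        _ = 2 * (2:ℝ) ^ (-((k : ℝ) * ((n ^ 128 : ℕ) : ℝ))) * ∑ γ, Qm γ := by
            rw [Finset.mul_sum]
        _ = 2 * (2:ℝ) ^ (-((k : ℝ) * ((n ^ 128 : ℕ) : ℝ))) := by rw [hQsum, mul_one]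
    have hc2 : ((2:ℝ) ^ (k * n ^ 128)) * (2 * (2:ℝ) ^ (-((k : ℝ) * ((n ^ 128 : ℕ) : ℝ)))) = 2 := by
      have e : ((2:ℝ) ^ (k * n ^ 128)) = (2:ℝ) ^ ((k : ℝ) * ((n ^ 128 : ℕ) : ℝ)) := by
        rw [← Real.rpow_natCast 2 (k * n ^ 128)]
        congr 1
        push_cast
        ring
      rw [e, ← mul_assoc, mul_comm ((2:ℝ) ^ ((k : ℝ) * ((n ^ 128 : ℕ) : ℝ))) 2, mul_assoc,
        ← Real.rpow_add (by norm_num : (0:ℝ) < 2)]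
      simp
    calc ∑ α, G α ^ 2
        ≤ ((2:ℝ) ^ (k * n ^ 128)) * ∑ γ, Qm γ ^ 2 := hbes
      _ ≤ ((2:ℝ) ^ (k * n ^ 128)) * (2 * (2:ℝ) ^ (-((k : ℝ) * ((n ^ 128 : ℕ) : ℝ)))) :=
          mul_le_mul_of_nonneg_left hQQ (by positivity)
      _ = 2 := hc2
  -- Step 7: conclude
  have habs : |∑ α, P α * G α| ≤
      Real.sqrt (((n ^ 128 : ℕ) : ℝ) ^ (-(0.4 * (k : ℝ))) * 2) := by
    rw [← Real.sqrt_sq_eq_abs]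
    refine Real.sqrt_le_sqrt ?_
    calc (∑ α, P α * G α) ^ 2 ≤ (∑ α, P α ^ 2) * ∑ α, G α ^ 2 := hCS
      _ ≤ ((n ^ 128 : ℕ) : ℝ) ^ (-(0.4 * (k : ℝ))) * 2 := by
          refine mul_le_mul hPP hGG ?_ ?_
          · exact Finset.sum_nonneg fun α _ => sq_nonneg _
          · exact Real.rpow_nonneg (by positivity) _
  refine habs.trans ?_
  -- final numeric estimate
  have hn1 : (1:ℝ) ≤ (n:ℝ) := by
    have : (8:ℝ) ≤ (n:ℝ) := by exact_mod_cast hn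
    linarith
  have hnpos : (0:ℝ) < (n:ℝ) := by linarith
  have hp : ((n ^ 128 : ℕ) : ℝ) ^ (-(0.4 * (k : ℝ))) = (n:ℝ) ^ (-(51.2 * (k : ℝ))) := by
    have e : ((n ^ 128 : ℕ) : ℝ) = (n:ℝ) ^ ((128 : ℕ) : ℝ) := by
      rw [Real.rpow_natCast]
      push_cast
      ring
    rw [e, ← Real.rpow_mul hnpos.le]
    congr 1
    ring
  rw [hp]
  have hrhs : ((1:ℝ) / 2 * (n : ℝ) ^ (-(5 * (I.card : ℝ)))) ^ 2
      = 1 / 4 * (n : ℝ) ^ (-(10 * (I.card : ℝ))) := by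
    rw [mul_pow, ← Real.rpow_natCast ((n:ℝ) ^ (-(5 * (I.card : ℝ)))) 2,
      ← Real.rpow_mul hnpos.le]
    norm_num
    congr 1
    ring
  have hB0 : (0:ℝ) ≤ (1:ℝ) / 2 * (n : ℝ) ^ (-(5 * (I.card : ℝ))) := by positivity
  rw [show ((1:ℝ)/2 * (n : ℝ) ^ (-(5 * (I.card : ℝ))))
      = Real.sqrt (((1:ℝ)/2 * (n : ℝ) ^ (-(5 * (I.card : ℝ)))) ^ 2) from
    (Real.sqrt_sq hB0).symm]
  refine Real.sqrt_le_sqrt ?_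
  rw [hrhs]
  -- 2 * n^(-51.2 k) ≤ 1/4 * n^(-10 cI)
  have hIle : (I.card : ℝ) ≤ 2 * (k : ℝ) := by exact_mod_cast hcard
  have h1 : (n:ℝ) ^ (-(20 * (k : ℝ))) ≤ (n:ℝ) ^ (-(10 * (I.card : ℝ))) :=
    Real.rpow_le_rpow_of_exponent_le hn1 (by linarith)
  have h2 : (n:ℝ) ^ (-(51.2 * (k : ℝ)))
      = (n:ℝ) ^ (-(20 * (k : ℝ))) * (n:ℝ) ^ (-(31.2 * (k : ℝ))) := by
    rw [← Real.rpow_add hnpos]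
    congr 1
    ring
  have h8 : (8:ℝ) ≤ (n:ℝ) ^ ((31.2 : ℝ) * (k : ℝ)) := by
    have hk1' : (1:ℝ) ≤ (k:ℝ) := by exact_mod_cast hk1
    calc (8:ℝ) ≤ (n:ℝ) := by exact_mod_cast hn
      _ = (n:ℝ) ^ (1:ℝ) := (Real.rpow_one _).symm
      _ ≤ (n:ℝ) ^ ((31.2 : ℝ) * (k : ℝ)) :=
          Real.rpow_le_rpow_of_exponent_le hn1 (by linarith)
  have h3 : (n:ℝ) ^ (-(31.2 * (k : ℝ))) ≤ 1 / 8 := by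
    rw [Real.rpow_neg hnpos.le]
    have hpos8 : (0:ℝ) < (n:ℝ) ^ ((31.2 : ℝ) * (k : ℝ)) := Real.rpow_pos_of_pos hnpos _
    have h9 : ((n:ℝ) ^ ((31.2 : ℝ) * (k : ℝ)))⁻¹ ≤ (8:ℝ)⁻¹ :=
      inv_anti₀ (by norm_num) h8
    calc ((n:ℝ) ^ ((31.2:ℝ) * (k : ℝ)))⁻¹ ≤ (8:ℝ)⁻¹ := h9
      _ = 1 / 8 := by norm_num
  have h4 : (0:ℝ) < (n:ℝ) ^ (-(20 * (k : ℝ))) := Real.rpow_pos_of_pos hnpos _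
  calc (n:ℝ) ^ (-(51.2 * (k : ℝ))) * 2
      = 2 * ((n:ℝ) ^ (-(20 * (k : ℝ))) * (n:ℝ) ^ (-(31.2 * (k : ℝ)))) := by
        rw [h2]; ring
    _ ≤ 2 * ((n:ℝ) ^ (-(20 * (k : ℝ))) * (1/8)) := by
        refine mul_le_mul_of_nonneg_left (mul_le_mul_of_nonneg_left h3 h4.le) (by norm_num)
    _ = 1/4 * (n:ℝ) ^ (-(20 * (k : ℝ))) := by ring
    _ ≤ 1/4 * (n:ℝ) ^ (-(10 * (I.card : ℝ))) := by
        exact mul_le_mul_of_nonneg_left h1 (by norm_num)
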